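/- Let H be a complex Hilbert space, let h₁,…,hₙ be mutually orthogonal unit vectors in H, and let f₁,…,fₙ be unit vectors in H satisfying s := Σ_{i≠j} |⟨f_i, f_j⟩| < 1. Let T : span{h₁,…,hₙ} → H be the linear operator determined by T h_i = f_i for i = 1,…,n. Then for every h ∈ span{h₁,…,hₙ}, one has (1 − s)^{1/2} ‖h‖ ≤ ‖Th‖ ≤ (1 + s)^{1/2} ‖h‖. -/

import Mathlib

noncomputable section
set_option maxHeartbeats 1000000

open scoped InnerProductSpace
open Finset

private lemma swap_offdiag_sum {n : ℕ} (F : Fin n → Fin n → ℝ) :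
    ∑ i : Fin n, ∑ j ∈ Finset.univ.filter (fun j => j ≠ i), F i j
      = ∑ i : Fin n, ∑ j ∈ Finset.univ.filter (fun j => j ≠ i), F j i := by
  simp_rw [Finset.sum_filter]
  rw [Finset.sum_comm]
  exact Finset.sum_congr rfl fun a _ => Finset.sum_congr rfl fun b _ =>
    if_congr ne_comm rfl rfl


private lemma offdiag_bound {H : Type*} [NormedAddCommGroup H] [InnerProductSpace ℂ H]
    {n : ℕ} (f : Fin n → H) (c : Fin n → ℂ) (s : ℝ)
    (hs : s = ∑ i : Fin n, ∑ j ∈ Finset.univ.filter (fun j => j ≠ i), ‖⟪f i, f j⟫_ℂ‖) :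
    ∑ i : Fin n, ∑ j ∈ Finset.univ.filter (fun j => j ≠ i),
      ‖c i‖ * ‖c j‖ * ‖⟪f i, f j⟫_ℂ‖ ≤ s * ∑ i : Fin n, ‖c i‖ ^ 2 := by
  have h3 : ∑ i : Fin n, ∑ j ∈ Finset.univ.filter (fun j => j ≠ i),
      ‖c i‖ * ‖c j‖ * ‖⟪f i, f j⟫_ℂ‖
      ≤ ∑ i : Fin n, ∑ j ∈ Finset.univ.filter (fun j => j ≠ i),
        ((‖c i‖ ^ 2 / 2) * ‖⟪f i, f j⟫_ℂ‖ + (‖c j‖ ^ 2 / 2) * ‖⟪f i, f j⟫_ℂ‖) := by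
    refine Finset.sum_le_sum fun i _ => Finset.sum_le_sum fun j _ => ?_
    nlinarith [sq_nonneg (‖c i‖ - ‖c j‖), norm_nonneg (c i), norm_nonneg (c j),
      norm_nonneg (⟪f i, f j⟫_ℂ)]
  have h4 : ∑ i : Fin n, ∑ j ∈ Finset.univ.filter (fun j => j ≠ i),
        ((‖c i‖ ^ 2 / 2) * ‖⟪f i, f j⟫_ℂ‖ + (‖c j‖ ^ 2 / 2) * ‖⟪f i, f j⟫_ℂ‖)
      = ∑ i : Fin n, ∑ j ∈ Finset.univ.filter (fun j => j ≠ i),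
        (‖c i‖ ^ 2) * ‖⟪f i, f j⟫_ℂ‖ := by
    simp_rw [Finset.sum_add_distrib]
    rw [swap_offdiag_sum (fun i j => (‖c j‖ ^ 2 / 2) * ‖⟪f i, f j⟫_ℂ‖)]
    rw [← Finset.sum_add_distrib]
    refine Finset.sum_congr rfl fun i _ => ?_
    rw [← Finset.sum_add_distrib]
    refine Finset.sum_congr rfl fun j _ => ?_
    rw [norm_inner_symm (f j) (f i)]
    ring
  have hrow : ∀ i, ∑ j ∈ Finset.univ.filter (fun j => j ≠ i), ‖⟪f i, f j⟫_ℂ‖ ≤ s := by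
    intro i
    rw [hs]
    exact Finset.single_le_sum
      (f := fun a => ∑ j ∈ Finset.univ.filter (fun j => j ≠ a), ‖⟪f a, f j⟫_ℂ‖)
      (fun k _ => by positivity) (Finset.mem_univ i)
  have h5 : ∑ i : Fin n, ∑ j ∈ Finset.univ.filter (fun j => j ≠ i),
        (‖c i‖ ^ 2) * ‖⟪f i, f j⟫_ℂ‖ ≤ s * ∑ i : Fin n, ‖c i‖ ^ 2 := by
    rw [Finset.mul_sum]
    refine Finset.sum_le_sum fun i _ => ?_
    rw [← Finset.mul_sum, mul_comm s _]
    exact mul_le_mul_of_nonneg_left (hrow i) (by positivity)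
  linarith

/-- Let `h₁, …, hₙ` be mutually orthogonal unit vectors and `f₁, …, fₙ` unit
vectors in a complex Hilbert space with `s := Σ_{i ≠ j} |⟨f_i, f_j⟩| < 1`.  If `T` is a linear
operator with `T hᵢ = fᵢ` for all `i`, then for every `h` in the span of the `hᵢ`,
`(1 - s)^{1/2} ‖h‖ ≤ ‖T h‖ ≤ (1 + s)^{1/2} ‖h‖`. -/
theorem stable_iso_stmt5
    {H : Type*} [NormedAddCommGroup H] [InnerProductSpace ℂ H] [CompleteSpace H]
    {n : ℕ} (h f : Fin n → H)
    (hh_unit : ∀ i, ‖h i‖ = 1)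
    (hh_orth : ∀ i j, i ≠ j → ⟪h i, h j⟫_ℂ = 0)
    (hf_unit : ∀ i, ‖f i‖ = 1)
    (s : ℝ)
    (hs : s = ∑ i : Fin n, ∑ j ∈ Finset.univ.filter (fun j => j ≠ i), ‖⟪f i, f j⟫_ℂ‖)
    (hs1 : s < 1)
    (T : H →ₗ[ℂ] H) (hT : ∀ i, T (h i) = f i) :
    ∀ x ∈ Submodule.span ℂ (Set.range h),
      Real.sqrt (1 - s) * ‖x‖ ≤ ‖T x‖ ∧ ‖T x‖ ≤ Real.sqrt (1 + s) * ‖x‖ := by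
  have hs0 : 0 ≤ s := by
    rw [hs]; positivity
  have onh : Orthonormal ℂ h := by
    rw [orthonormal_iff_ite]
    intro i j
    by_cases hij : i = j
    · subst hij
      simp [inner_self_eq_norm_sq_to_K, hh_unit i]
    · simp [hij, hh_orth i j hij]
  intro x hx
  obtain ⟨c, rfl⟩ := (Submodule.mem_span_range_iff_exists_fun ℂ).mp hx
  set x : H := ∑ i, c i • h i with hxdef
  set B : ℝ := ∑ i, ‖c i‖ ^ 2 with hBdef
  -- norm of x
  have hBx : ‖x‖ ^ 2 = B := by
    rw [InnerProductSpace.norm_sq_eq_re_inner (𝕜 := ℂ), hxdef, onh.inner_sum]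
    simp only [RCLike.conj_mul]
    simp [← Complex.ofReal_pow, hBdef]
  have hB0 : 0 ≤ B := by positivity
  -- T x
  have hTx : T x = ∑ i, c i • f i := by
    rw [hxdef, map_sum]
    simp [hT]
  -- inner product expansion
  have hinner : ⟪T x, T x⟫_ℂ
      = ∑ i, ∑ j, (starRingEnd ℂ) (c i) * c j * ⟪f i, f j⟫_ℂ := by
    rw [hTx, sum_inner]
    refine Finset.sum_congr rfl fun i _ => ?_
    rw [inner_sum]
    refine Finset.sum_congr rfl fun j _ => ?_
    rw [inner_smul_left, inner_smul_right]; ring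
  -- separate diagonal
  set E : ℂ := ∑ i, ∑ j ∈ Finset.univ.filter (fun j => j ≠ i),
      (starRingEnd ℂ) (c i) * c j * ⟪f i, f j⟫_ℂ with hEdef
  have hff : ∀ i, ⟪f i, f i⟫_ℂ = 1 := by
    intro i
    rw [inner_self_eq_norm_sq_to_K, hf_unit i]
    norm_num
  have hinner' : ⟪T x, T x⟫_ℂ = (B : ℂ) + E := by
    rw [hinner, hEdef, hBdef]
    push_cast
    rw [← Finset.sum_add_distrib]
    refine Finset.sum_congr rfl fun i _ => ?_
    rw [← Finset.sum_filter_add_sum_filter_not Finset.univ (fun j => j ≠ i)]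
    have : Finset.univ.filter (fun j => ¬ j ≠ i) = {i} := by
      ext j; simp [eq_comm]
    rw [this, add_comm]
    congr 1
    simp [hff i, RCLike.conj_mul, hf_unit i]
  have hA : ‖T x‖ ^ 2 = B + Complex.re E := by
    rw [InnerProductSpace.norm_sq_eq_re_inner (𝕜 := ℂ), hinner']
    simp
  -- bound on re E
  have hEbound : |Complex.re E| ≤ s * B := by
    have h1 : |Complex.re E| ≤ ‖E‖ := Complex.abs_re_le_norm E
    have h2 : ‖E‖ ≤ ∑ i, ∑ j ∈ Finset.univ.filter (fun j => j ≠ i),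
        ‖c i‖ * ‖c j‖ * ‖⟪f i, f j⟫_ℂ‖ := by
      refine (norm_sum_le _ _).trans (Finset.sum_le_sum fun i _ => ?_)
      refine (norm_sum_le _ _).trans (Finset.sum_le_sum fun j _ => ?_)
      rw [norm_mul, norm_mul, RCLike.norm_conj]
    have h5 := offdiag_bound f c s hs
    rw [← hBdef] at h5
    linarith
  -- conclude
  have hlow : (1 - s) * ‖x‖ ^ 2 ≤ ‖T x‖ ^ 2 := by
    rw [hBx, hA]
    have := abs_le.mp hEbound
    nlinarith
  have hhigh : ‖T x‖ ^ 2 ≤ (1 + s) * ‖x‖ ^ 2 := by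
    rw [hBx, hA]
    have := abs_le.mp hEbound
    nlinarith
  constructor
  · have := Real.sqrt_le_sqrt hlow
    rwa [Real.sqrt_mul (by linarith), Real.sqrt_sq (norm_nonneg _),
      Real.sqrt_sq (norm_nonneg _)] at this
  · have := Real.sqrt_le_sqrt hhigh
    rwa [Real.sqrt_mul (by linarith), Real.sqrt_sq (norm_nonneg _),
      Real.sqrt_sq (norm_nonneg _)] at this
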